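/- Let X be an integrable real random variable with E[X] = 0 and P(|X| > t) ≤ min{1, 2·e^{-t²/2}} for all t ≥ 0, and let G be a standard normal random variable. Then for every convex function f : ℝ → ℝ such that E[f(c₀·G)] is finite, E[f(X)] ≤ E[f(c₀·G)], where c₀ is the sharp one-dimensional sub-Gaussian comparison constant. -/

import Mathlib

open MeasureTheory ProbabilityTheory Real Set
open Filter Topology

/-- The standard normal density `φ(x) = (2π)^{-1/2} e^{-x²/2}`. -/
noncomputable def stdNormalPDF (x : ℝ) : ℝ :=
  (Real.sqrt (2 * Real.pi))⁻¹ * Real.exp (-x ^ 2 / 2)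

/-- The Gaussian tail `Φ̄(x) = ∫_x^∞ φ(t) dt`. -/
noncomputable def gaussTail (x : ℝ) : ℝ := ∫ t in Set.Ioi x, stdNormalPDF t

/-- `B = A/2`, where `A = t₀ + 2 ∫_{t₀}^∞ e^{-t²/2} dt` and `t₀ = √(2 log 2)`. -/
noncomputable def Bconst : ℝ :=
  Real.sqrt (2 * Real.log 2) / 2 +
    ∫ t in Set.Ioi (Real.sqrt (2 * Real.log 2)), Real.exp (-t ^ 2 / 2)

/-- `H(x) = 2x e^{-x²/2} + 2 ∫_x^∞ e^{-t²/2} dt`. -/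
noncomputable def Hfun (x : ℝ) : ℝ :=
  2 * x * Real.exp (-x ^ 2 / 2) + 2 * ∫ t in Set.Ioi x, Real.exp (-t ^ 2 / 2)


namespace SubG

noncomputable def td (f : ℝ → ℝ) (s : ℝ) : ℝ := sInf ((fun u => (f u - f s) / (u - s)) '' Ioi s)

variable {f : ℝ → ℝ}

lemma slope_mono3 (hf : ConvexOn ℝ univ f) {x y z : ℝ} (hxy : x < y) (hyz : y < z) :
    (f y - f x) / (y - x) ≤ (f z - f y) / (z - y) :=
  hf.slope_mono_adjacent (mem_univ x) (mem_univ z) hxy hyz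

lemma td_le_slope (hf : ConvexOn ℝ univ f) {s u : ℝ} (hu : s < u) :
    td f s ≤ (f u - f s) / (u - s) := by
  rw [td]
  apply csInf_le _ (mem_image_of_mem _ hu)
  refine ⟨(f s - f (s-1)) / (s - (s-1)), ?_⟩
  rintro m ⟨v, hv, rfl⟩
  exact slope_mono3 hf (by linarith) hv

lemma slope_le_td (hf : ConvexOn ℝ univ f) {x s : ℝ} (hx : x < s) :
    (f s - f x) / (s - x) ≤ td f s := by
  rw [td]
  apply le_csInf (Set.Nonempty.image _ ⟨s+1, by simp⟩)
  rintro m ⟨v, hv, rfl⟩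
  exact slope_mono3 hf hx hv

lemma td_tangent (hf : ConvexOn ℝ univ f) (s x : ℝ) : f s + td f s * (x - s) ≤ f x := by
  rcases lt_trichotomy x s with h | h | h
  · have h1 := slope_le_td hf h
    have h2 : s - x > 0 := by linarith
    rw [div_le_iff₀ h2] at h1
    nlinarith
  · simp [h]
  · have h1 := td_le_slope hf h
    have h3 : (0:ℝ) < x - s := by linarith
    rw [le_div_iff₀ h3] at h1
    nlinarith

lemma td_mono (hf : ConvexOn ℝ univ f) : Monotone (td f) := by
  intro s s' hss'
  rcases eq_or_lt_of_le hss' with rfl | h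
  · exact le_refl _
  · calc td f s ≤ (f s' - f s) / (s' - s) := td_le_slope hf h
    _ ≤ td f s' := slope_le_td hf h

/-- tangent line at `p`. -/
noncomputable def tline (f : ℝ → ℝ) (p : ℝ) (x : ℝ) : ℝ := f p + td f p * (x - p)

lemma tline_le (hf : ConvexOn ℝ univ f) (p x : ℝ) : tline f p x ≤ f x := td_tangent hf p x

/-- iterated max of tangent lines at points `s 0, ..., s n`. -/
noncomputable def J (f : ℝ → ℝ) (s : ℕ → ℝ) : ℕ → ℝ → ℝ
  | 0 => tline f (s 0)
  | n + 1 => fun x => max (J f s n x) (tline f (s (n+1)) x)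

lemma J_le (hf : ConvexOn ℝ univ f) (s : ℕ → ℝ) (n : ℕ) (x : ℝ) : J f s n x ≤ f x := by
  induction n with
  | zero => exact tline_le hf _ x
  | succ n ih => exact max_le ih (tline_le hf _ x)

lemma tline_le_J (hf : ConvexOn ℝ univ f) (s : ℕ → ℝ) {i n : ℕ} (hin : i ≤ n) (x : ℝ) :
    tline f (s i) x ≤ J f s n x := by
  induction n with
  | zero => simp_all [J, Nat.le_zero.mp hin]
  | succ n ih =>
    rcases Nat.lt_or_ge i (n+1) with h | h
    · exact le_trans (ih (Nat.lt_succ_iff.mp h)) (le_max_left _ _)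
    · have : i = n + 1 := le_antisymm hin h
      subst this
      exact le_max_right _ _

lemma J_exists_eq (f : ℝ → ℝ) (s : ℕ → ℝ) (n : ℕ) (x : ℝ) :
    ∃ i ≤ n, J f s n x = tline f (s i) x := by
  induction n with
  | zero => exact ⟨0, le_refl _, rfl⟩
  | succ n ih =>
    obtain ⟨i, hi, hif⟩ := ih
    rcases max_cases (J f s n x) (tline f (s (n+1)) x) with ⟨h1, _⟩ | ⟨h1, _⟩
    · exact ⟨i, Nat.le_succ_of_le hi, by simpa [J, h1] using hif⟩
    · exact ⟨n+1, le_refl _, by simpa [J] using h1⟩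

lemma tline_mono_ge (hf : ConvexOn ℝ univ f) {p q x : ℝ} (hpq : p ≤ q) (hx : q ≤ x) :
    tline f p x ≤ tline f q x := by
  have h1 : tline f p q ≤ f q := tline_le hf p q
  have h2 : td f p ≤ td f q := td_mono hf hpq
  simp only [tline] at *
  nlinarith [h2, hx]

lemma J_eq_last (hf : ConvexOn ℝ univ f) {s : ℕ → ℝ} (hs : Monotone s) (n : ℕ) {x : ℝ}
    (hx : s n ≤ x) : J f s n x = tline f (s n) x := by
  induction n with
  | zero => rfl
  | succ n ih =>
    have h1 : s n ≤ x := le_trans (hs (Nat.le_succ n)) hx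
    have h2 : J f s n x = tline f (s n) x := ih h1
    simp only [J, h2]
    exact max_eq_right (tline_mono_ge hf (hs (Nat.le_succ n)) hx)



lemma cont_f (hf : ConvexOn ℝ univ f) : Continuous f := by
  rw [← continuousOn_univ]
  exact hf.continuousOn isOpen_univ

lemma cont_tline (p : ℝ) : Continuous (tline f p) := by
  unfold tline; fun_prop

lemma cont_J (s : ℕ → ℝ) (n : ℕ) : Continuous (J f s n) := by
  induction n with
  | zero => exact cont_tline _
  | succ n ih => exact ih.max (cont_tline _)

variable {P Q : Measure ℝ}

lemma integrable_tline [IsFiniteMeasure P] (h : Integrable id P) (p : ℝ) :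
    Integrable (tline f p) P := by
  have : Integrable (fun x : ℝ => x) P := h
  unfold tline
  apply Integrable.add (integrable_const _)
  exact (this.sub (integrable_const p)).const_mul _

lemma integrable_ramp [IsFiniteMeasure P] (h : Integrable id P) (c : ℝ) :
    Integrable (fun x => max (x - c) 0) P := by
  have : Integrable (fun x : ℝ => x) P := h
  have h2 := (this.sub (integrable_const c)).sup (integrable_const (0:ℝ))
  simpa [Pi.sup_def] using h2

lemma integrable_J [IsFiniteMeasure P] (h : Integrable id P) (s : ℕ → ℝ) (n : ℕ) :
    Integrable (J f s n) P := by
  induction n with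
  | zero => exact integrable_tline h _
  | succ n ih =>
    have h2 := ih.sup (integrable_tline (f := f) h (s (n+1)))
    simpa [Pi.sup_def, J] using h2

lemma integral_tline [IsProbabilityMeasure P] (h : Integrable id P) (p : ℝ) :
    ∫ x, tline f p x ∂P = f p + td f p * ((∫ x, x ∂P) - p) := by
  have hid : Integrable (fun x : ℝ => x) P := h
  have h1 : Integrable (fun x : ℝ => td f p * (x - p)) P := by
    have := (hid.sub (integrable_const p)).const_mul (td f p)
    simpa using this
  unfold tline
  rw [integral_add (integrable_const _) h1, integral_const, integral_const_mul,
    integral_sub hid (integrable_const p), integral_const]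
  simp

lemma J_succ_eq (hf : ConvexOn ℝ univ f) {s : ℕ → ℝ} (hs : Monotone s) (n : ℕ) :
    ∃ c, s n ≤ c ∧
      ∀ x, J f s (n+1) x = J f s n x + (td f (s (n+1)) - td f (s n)) * max (x - c) 0 := by
  set p := s n with hp
  set q := s (n+1) with hq
  set dp := td f p with hdp
  set dq := td f q with hdq
  have hpq : p ≤ q := hs (Nat.le_succ n)
  have hd : dp ≤ dq := td_mono hf hpq
  have h1 : f p + dp * (q - p) ≤ f q := td_tangent hf p q
  have h2 : f q + dq * (p - q) ≤ f p := td_tangent hf q p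
  rcases eq_or_lt_of_le hd with heq | hlt
  · refine ⟨p, le_refl _, fun x => ?_⟩
    have hfq : f q = f p + dp * (q - p) := by nlinarith
    have hline : tline f q x = tline f p x := by
      simp only [tline, ← hdp, ← hdq, ← heq, hfq]; ring
    have : J f s (n+1) x = max (J f s n x) (tline f q x) := rfl
    rw [this, hline, max_eq_left (tline_le_J hf s (le_refl n) x), ← heq]
    simp
  · set c := (f p - dp * p - (f q - dq * q)) / (dq - dp) with hc
    have hdd : (0:ℝ) < dq - dp := by linarith
    have hkey : (dq - dp) * c = f p - dp * p - (f q - dq * q) := by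
      rw [hc]; field_simp
    have hcp : p ≤ c := by
      rw [hc, le_div_iff₀ hdd]; nlinarith
    refine ⟨c, hcp, fun x => ?_⟩
    have hdiff : tline f q x - tline f p x = (dq - dp) * (x - c) := by
      simp only [tline, ← hdp, ← hdq]; nlinarith [hkey]
    have hJ : J f s (n+1) x = max (J f s n x) (tline f q x) := rfl
    rcases le_total x c with hx | hx
    · have h3 : tline f q x ≤ tline f p x := by nlinarith
      have h4 : tline f q x ≤ J f s n x := le_trans h3 (tline_le_J hf s (le_refl n) x)
      rw [hJ, max_eq_left h4, max_eq_right (by linarith : x - c ≤ 0)]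
      simp
    · have hJn : J f s n x = tline f p x := J_eq_last hf hs n (le_trans hcp hx)
      have h3 : tline f p x ≤ tline f q x := by nlinarith
      rw [hJ, max_eq_right (by rw [hJn]; exact h3), max_eq_left (by linarith), hJn]
      nlinarith

lemma integral_J_le [IsProbabilityMeasure P] [IsProbabilityMeasure Q]
    (hf : ConvexOn ℝ univ f)
    (hPint : Integrable id P) (hQint : Integrable id Q)
    (hmean : ∫ x, x ∂P = ∫ x, x ∂Q)
    (hsl : ∀ t, ∫ x, max (x - t) 0 ∂P ≤ ∫ x, max (x - t) 0 ∂Q)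
    {s : ℕ → ℝ} (hs : Monotone s) (n : ℕ) :
    ∫ x, J f s n x ∂P ≤ ∫ x, J f s n x ∂Q := by
  induction n with
  | zero =>
    show ∫ x, tline f (s 0) x ∂P ≤ ∫ x, tline f (s 0) x ∂Q
    rw [integral_tline hPint, integral_tline hQint, hmean]
  | succ n ih =>
    obtain ⟨c, _, hident⟩ := J_succ_eq hf hs n
    have hΔ : 0 ≤ td f (s (n+1)) - td f (s n) :=
      sub_nonneg.mpr (td_mono hf (hs (Nat.le_succ n)))
    have hrw : ∀ (R : Measure ℝ), IsProbabilityMeasure R → Integrable id R →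
        ∫ x, J f s (n+1) x ∂ R = ∫ x, J f s n x ∂ R
          + (td f (s (n+1)) - td f (s n)) * ∫ x, max (x - c) 0 ∂ R := by
      intro R hR hRint
      calc ∫ x, J f s (n+1) x ∂ R
          = ∫ x, (J f s n x + (td f (s (n+1)) - td f (s n)) * max (x - c) 0) ∂ R := by
            exact integral_congr_ae (Eventually.of_forall fun x => hident x)
        _ = _ := by
            rw [integral_add (integrable_J hRint s n) ((integrable_ramp hRint c).const_mul _),
              integral_const_mul]
    rw [hrw P ‹_› hPint, hrw Q ‹_› hQint]
    exact add_le_add ih (mul_le_mul_of_nonneg_left (hsl c) hΔ)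



lemma four_pow (n : ℕ) : (4:ℝ)^n = 2^n * 2^n := by
  rw [show (4:ℝ) = 2*2 by norm_num, mul_pow]

noncomputable def sgrid (n k : ℕ) : ℝ := (k : ℝ) * ((2:ℝ)^n)⁻¹ - 2 * 2^n

lemma sgrid_mono (n : ℕ) : Monotone (sgrid n) := by
  intro k k' h
  unfold sgrid
  have : (k:ℝ) ≤ (k':ℝ) := Nat.cast_le.mpr h
  have h2 : (0:ℝ) ≤ ((2:ℝ)^n)⁻¹ := by positivity
  nlinarith

lemma sgrid_nest (n k : ℕ) : sgrid n k = sgrid (n+1) (2*k + 4*4^n) := by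
  unfold sgrid
  have h2 : ((2:ℝ)^n) ≠ 0 := by positivity
  push_cast
  rw [four_pow]
  field_simp
  ring

lemma sgrid_zero (n : ℕ) : sgrid n (2*4^n) = 0 := by
  unfold sgrid
  have h2 : ((2:ℝ)^n) ≠ 0 := by positivity
  push_cast
  rw [four_pow]
  field_simp
  ring

noncomputable def fseq (f : ℝ → ℝ) (n : ℕ) : ℝ → ℝ := J f (sgrid n) (4*4^n)

lemma fseq_le (hf : ConvexOn ℝ univ f) (n : ℕ) (x : ℝ) : fseq f n x ≤ f x :=
  J_le hf _ _ x

lemma line0_le_fseq (hf : ConvexOn ℝ univ f) (n : ℕ) (x : ℝ) :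
    tline f 0 x ≤ fseq f n x := by
  have h := tline_le_J hf (sgrid n) (show 2*4^n ≤ 4*4^n by omega) x
  rwa [sgrid_zero] at h

lemma fseq_succ_le (hf : ConvexOn ℝ univ f) (n : ℕ) (x : ℝ) :
    fseq f n x ≤ fseq f (n+1) x := by
  obtain ⟨i, hi, heq⟩ := J_exists_eq f (sgrid n) (4*4^n) x
  rw [fseq, heq, sgrid_nest n i]
  exact tline_le_J hf _ (show 2*i + 4*4^n ≤ 4*4^(n+1) by omega) x

lemma fseq_mono (hf : ConvexOn ℝ univ f) (x : ℝ) : Monotone (fun n => fseq f n x) :=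
  monotone_nat_of_le_succ (fun n => fseq_succ_le hf n x)

lemma fseq_lb (hf : ConvexOn ℝ univ f) {x : ℝ} {n : ℕ} (hn : |x| + 1 ≤ 2^n) :
    f x - (td f (x+1) - td f x) * ((2:ℝ)^n)⁻¹ ≤ fseq f n x := by
  have h2pos : (0:ℝ) < 2^n := by positivity
  have h2one : (1:ℝ) ≤ 2^n := one_le_pow₀ (by norm_num)
  have hxabs : -(2:ℝ)^n ≤ x := by
    have := abs_le.mp (le_refl |x|) |>.1
    nlinarith [neg_abs_le x]
  set k : ℕ := ⌈(x + 2*2^n) * 2^n⌉₊ with hk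
  have hargnn : 0 ≤ (x + 2*2^n) * 2^n := by nlinarith
  have hk1 : (x + 2*2^n) * 2^n ≤ (k:ℝ) := Nat.le_ceil _
  have hk2 : (k:ℝ) < (x + 2*2^n) * 2^n + 1 := Nat.ceil_lt_add_one hargnn
  set p := sgrid n k with hp
  have hinv : (2:ℝ)^n * ((2:ℝ)^n)⁻¹ = 1 := mul_inv_cancel₀ (ne_of_gt h2pos)
  have hinvpos : (0:ℝ) < ((2:ℝ)^n)⁻¹ := by positivity
  have hxp : x ≤ p := by
    rw [hp, sgrid]
    nlinarith [mul_le_mul_of_nonneg_right hk1 hinvpos.le]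
  have hpx : p ≤ x + ((2:ℝ)^n)⁻¹ := by
    rw [hp, sgrid]
    nlinarith [mul_le_mul_of_nonneg_right hk2.le hinvpos.le]
  have hkb : k ≤ 4*4^n := by
    have hxle : x ≤ 2^n - 1 := by nlinarith [le_abs_self x]
    have hkr : (k:ℝ) ≤ ((4*4^n : ℕ) : ℝ) := by
      push_cast
      rw [four_pow]
      nlinarith
    exact_mod_cast hkr
  have hβ := tline_le_J hf (sgrid n) hkb x
  have hinv1 : ((2:ℝ)^n)⁻¹ ≤ 1 := by
    rw [inv_le_one_iff₀]; right; exact h2one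
  have hp1 : p ≤ x + 1 := hpx.trans (by linarith)
  have hdl : td f x ≤ td f p := td_mono hf hxp
  have hdu : td f p ≤ td f (x+1) := td_mono hf hp1
  have htan : f x + td f x * (p - x) ≤ f p := td_tangent hf x p
  have : f x - (td f (x+1) - td f x) * ((2:ℝ)^n)⁻¹ ≤ tline f p x := by
    simp only [tline]
    nlinarith [sub_nonneg.mpr hxp, sub_nonneg.mpr hdl, sub_nonneg.mpr hdu]
  exact this.trans hβ

lemma fseq_tendsto (hf : ConvexOn ℝ univ f) (x : ℝ) :
    Tendsto (fun n => fseq f n x) atTop (𝓝 (f x)) := by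
  have h0 : Tendsto (fun n : ℕ => ((2:ℝ)^n)⁻¹) atTop (𝓝 0) := by
    apply tendsto_inv_atTop_zero.comp
    exact tendsto_pow_atTop_atTop_of_one_lt (by norm_num)
  have hlow : Tendsto (fun n : ℕ => f x - (td f (x+1) - td f x) * ((2:ℝ)^n)⁻¹)
      atTop (𝓝 (f x)) := by
    have := h0.const_mul (td f (x+1) - td f x)
    have h2 := (tendsto_const_nhds (x := f x) (f := atTop (α := ℕ))).sub this
    simpa using h2
  have hev : ∀ᶠ n : ℕ in atTop, |x| + 1 ≤ 2^n := by
    have : Tendsto (fun n : ℕ => (2:ℝ)^n) atTop atTop :=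
      tendsto_pow_atTop_atTop_of_one_lt (by norm_num)
    exact this.eventually_ge_atTop _
  apply tendsto_of_tendsto_of_tendsto_of_le_of_le' hlow tendsto_const_nhds
  · filter_upwards [hev] with n hn
    exact fseq_lb hf hn
  · exact Eventually.of_forall fun n => fseq_le hf n x

theorem integral_convex_le (hf : ConvexOn ℝ univ f)
    [IsProbabilityMeasure P] [IsProbabilityMeasure Q]
    (hPint : Integrable id P) (hQint : Integrable id Q)
    (hmean : ∫ x, x ∂P = ∫ x, x ∂Q)
    (hsl : ∀ t, ∫ x, max (x - t) 0 ∂P ≤ ∫ x, max (x - t) 0 ∂Q)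
    (hfQ : Integrable f Q) :
    ∫ x, f x ∂P ≤ ∫ x, f x ∂Q := by
  have hint : ∀ n, ∫ x, fseq f n x ∂P ≤ ∫ x, fseq f n x ∂Q :=
    fun n => integral_J_le hf hPint hQint hmean hsl (sgrid_mono n) _
  set ℓ := tline f 0 with hℓdef
  have hℓP : Integrable ℓ P := integrable_tline hPint 0
  have hℓQ : Integrable ℓ Q := integrable_tline hQint 0
  have hℓeq : ∫ x, ℓ x ∂P = ∫ x, ℓ x ∂Q := by
    rw [hℓdef, integral_tline hPint, integral_tline hQint, hmean]
  have hnn : ∀ n x, 0 ≤ fseq f n x - ℓ x := fun n x => sub_nonneg.mpr (line0_le_fseq hf n x)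
  have hfnn : ∀ x, 0 ≤ f x - ℓ x := fun x => sub_nonneg.mpr (tline_le hf 0 x)
  have hmeas : ∀ n : ℕ, Measurable fun x => ENNReal.ofReal (fseq f n x - ℓ x) :=
    fun n => ((cont_J (sgrid n) _).sub (cont_tline 0)).measurable.ennreal_ofReal
  have hkey : ∀ (R : Measure ℝ), IsProbabilityMeasure R → Integrable id R →
      ∫⁻ x, ENNReal.ofReal (f x - ℓ x) ∂ R
        = ⨆ n, ENNReal.ofReal ((∫ x, fseq f n x ∂ R) - ∫ x, ℓ x ∂ R) := by
    intro R hRP hRint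
    have h1 : ∀ n, ENNReal.ofReal ((∫ x, fseq f n x ∂ R) - ∫ x, ℓ x ∂ R)
        = ∫⁻ x, ENNReal.ofReal (fseq f n x - ℓ x) ∂ R := by
      intro n
      have hfsint : Integrable (fseq f n) R := integrable_J hRint _ _
      have hℓR : Integrable ℓ R := integrable_tline hRint 0
      have hsub : Integrable (fun x => fseq f n x - ℓ x) R := hfsint.sub hℓR
      rw [← integral_sub hfsint hℓR]
      exact ofReal_integral_eq_lintegral_ofReal hsub (Eventually.of_forall fun x => hnn n x)
    calc ∫⁻ x, ENNReal.ofReal (f x - ℓ x) ∂ R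
        = ∫⁻ x, ⨆ n, ENNReal.ofReal (fseq f n x - ℓ x) ∂ R := by
          congr 1; funext x
          refine (tendsto_nhds_unique (tendsto_atTop_iSup ?_) ?_).symm
          · intro m n hmn
            exact ENNReal.ofReal_le_ofReal (by have := fseq_mono hf x hmn; linarith)
          · exact (ENNReal.continuous_ofReal.tendsto _).comp
              ((fseq_tendsto hf x).sub_const (ℓ x))
      _ = ⨆ n, ∫⁻ x, ENNReal.ofReal (fseq f n x - ℓ x) ∂ R := by
          apply lintegral_iSup hmeas
          intro m n hmn x
          exact ENNReal.ofReal_le_ofReal (by have := fseq_mono hf x hmn; linarith)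
      _ = ⨆ n, ENNReal.ofReal ((∫ x, fseq f n x ∂ R) - ∫ x, ℓ x ∂ R) := by
          simp_rw [h1]
  have hQside : ∫⁻ x, ENNReal.ofReal (f x - ℓ x) ∂Q
      = ENNReal.ofReal (∫ x, (f x - ℓ x) ∂Q) :=
    (ofReal_integral_eq_lintegral_ofReal (hfQ.sub hℓQ)
      (Eventually.of_forall hfnn)).symm
  have hPQ : ∫⁻ x, ENNReal.ofReal (f x - ℓ x) ∂P ≤ ∫⁻ x, ENNReal.ofReal (f x - ℓ x) ∂Q := by
    rw [hkey P ‹_› hPint, hkey Q ‹_› hQint]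
    exact iSup_mono fun n => ENNReal.ofReal_le_ofReal (by have := hint n; linarith [hℓeq])
  have hintP : Integrable (fun x => f x - ℓ x) P := by
    refine ⟨((cont_f hf).sub (cont_tline 0)).aestronglyMeasurable, ?_⟩
    rw [hasFiniteIntegral_iff_ofReal (Eventually.of_forall hfnn)]
    exact lt_of_le_of_lt (hPQ.trans_eq hQside) ENNReal.ofReal_lt_top
  have hfP : Integrable f P := by
    have h := hintP.add hℓP
    have heq : (fun x => f x - ℓ x) + ℓ = f := by funext x; simp
    rwa [heq] at h
  have hfinal : ∫ x, (f x - ℓ x) ∂P ≤ ∫ x, (f x - ℓ x) ∂Q := by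
    have h2 := hPQ
    rw [hQside, ← ofReal_integral_eq_lintegral_ofReal hintP (Eventually.of_forall hfnn)] at h2
    exact (ENNReal.ofReal_le_ofReal_iff (integral_nonneg hfnn)).mp h2
  rw [integral_sub hfP hℓP, integral_sub hfQ hℓQ] at hfinal
  linarith [hℓeq]



/-! ### Part C: Gaussian computations -/

lemma integrable_expNegSq : Integrable (fun t : ℝ => Real.exp (-t^2/2)) := by
  have h := integrable_exp_neg_mul_sq (show (0:ℝ) < 1/2 by norm_num)
  refine h.congr ?_
  refine Eventually.of_forall fun x => ?_
  ring_nf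

lemma integrable_pdf : Integrable stdNormalPDF := by
  unfold stdNormalPDF
  exact integrable_expNegSq.const_mul _

lemma cont_pdf : Continuous stdNormalPDF := by
  unfold stdNormalPDF; fun_prop

lemma pdf_pos (x : ℝ) : 0 < stdNormalPDF x := by
  unfold stdNormalPDF
  have h2 : (0:ℝ) < Real.sqrt (2 * Real.pi) :=
    Real.sqrt_pos.mpr (by positivity)
  positivity

lemma pdf_tendsto_atTop : Tendsto stdNormalPDF atTop (𝓝 0) := by
  unfold stdNormalPDF
  rw [show (0:ℝ) = (Real.sqrt (2 * Real.pi))⁻¹ * 0 by ring]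
  apply Tendsto.const_mul
  apply Real.tendsto_exp_atBot.comp
  have : Tendsto (fun x : ℝ => x^2) atTop atTop := by
    exact tendsto_pow_atTop (by norm_num)
  apply Tendsto.atBot_div_const (by norm_num : (0:ℝ) < 2)
  exact tendsto_neg_atBot_iff.mpr this

lemma pdf_tendsto_atBot : Tendsto stdNormalPDF atBot (𝓝 0) := by
  unfold stdNormalPDF
  rw [show (0:ℝ) = (Real.sqrt (2 * Real.pi))⁻¹ * 0 by ring]
  apply Tendsto.const_mul
  apply Real.tendsto_exp_atBot.comp
  apply Tendsto.atBot_div_const (by norm_num : (0:ℝ) < 2)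
  apply tendsto_neg_atBot_iff.mpr
  have hneg : Tendsto (fun x : ℝ => -x) atBot atTop := tendsto_neg_atBot_atTop
  have h := (tendsto_pow_atTop (n := 2) (by norm_num : 2 ≠ 0)).comp hneg
  refine h.congr fun x => ?_
  simp [Function.comp, neg_sq]

lemma hasDerivAt_pdf (x : ℝ) : HasDerivAt stdNormalPDF (-x * stdNormalPDF x) x := by
  unfold stdNormalPDF
  have h1 : HasDerivAt (fun x : ℝ => -x^2/2) (-x) x := by
    have := ((hasDerivAt_pow 2 x).neg).div_const 2
    simpa using this.congr_deriv (by ring)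
  have h2 := (h1.exp).const_mul (Real.sqrt (2 * Real.pi))⁻¹
  refine h2.congr_deriv ?_
  ring

lemma gaussTail_sub (x y : ℝ) : gaussTail y = gaussTail x - ∫ u in x..y, stdNormalPDF u := by
  have key : ∀ {p q : ℝ}, p ≤ q → gaussTail p = (∫ u in Ioc p q, stdNormalPDF u) + gaussTail q := by
    intro p q hpq
    rw [gaussTail, ← Ioc_union_Ioi_eq_Ioi hpq,
      setIntegral_union (Ioc_disjoint_Ioi le_rfl) measurableSet_Ioi
        (integrable_pdf.integrableOn) (integrable_pdf.integrableOn)]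
    rfl
  rcases le_total x y with h | h
  · rw [intervalIntegral.integral_of_le h, key h]; ring
  · rw [intervalIntegral.integral_of_ge h, key h]; ring

lemma hasDerivAt_gaussTail (x : ℝ) : HasDerivAt gaussTail (-stdNormalPDF x) x := by
  have hrepr : gaussTail = fun y => gaussTail x - ∫ u in x..y, stdNormalPDF u :=
    funext fun y => gaussTail_sub x y
  rw [hrepr]
  have h1 : HasDerivAt (fun y => ∫ u in x..y, stdNormalPDF u) (stdNormalPDF x) x :=
    intervalIntegral.integral_hasDerivAt_right
      (integrable_pdf.intervalIntegrable)
      (cont_pdf.stronglyMeasurableAtFilter _ _)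
      cont_pdf.continuousAt
  simpa using (h1.const_sub (gaussTail x))

lemma gaussTail_nonneg (x : ℝ) : 0 ≤ gaussTail x :=
  setIntegral_nonneg measurableSet_Ioi fun t _ => (pdf_pos t).le

lemma gaussTail_anti : Antitone gaussTail := by
  intro x y hxy
  have h := gaussTail_sub x y
  rw [intervalIntegral.integral_of_le hxy] at h
  have : 0 ≤ ∫ u in Ioc x y, stdNormalPDF u :=
    setIntegral_nonneg measurableSet_Ioc fun t _ => (pdf_pos t).le
  linarith

lemma gaussTail_tendsto : Tendsto gaussTail atTop (𝓝 0) := by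
  have h1 : Tendsto (fun y : ℝ => ∫ u in (0:ℝ)..y, stdNormalPDF u) atTop
      (𝓝 (∫ u in Ioi (0:ℝ), stdNormalPDF u)) :=
    intervalIntegral_tendsto_integral_Ioi 0 (integrable_pdf.integrableOn) tendsto_id
  have h2 : Tendsto (fun y => gaussTail 0 - ∫ u in (0:ℝ)..y, stdNormalPDF u) atTop
      (𝓝 (gaussTail 0 - ∫ u in Ioi (0:ℝ), stdNormalPDF u)) :=
    (tendsto_const_nhds).sub h1
  have h3 : gaussTail 0 - ∫ u in Ioi (0:ℝ), stdNormalPDF u = 0 := by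
    rw [gaussTail]; ring
  rw [h3] at h2
  refine h2.congr fun y => (gaussTail_sub 0 y).symm

/-- From a nonpositive derivative on `Ici x` and limit `0` at `+∞`, nonnegativity at `x`. -/
lemma nonneg_of_deriv_nonpos_tendsto {k k' : ℝ → ℝ} {x : ℝ}
    (hd : ∀ y ∈ Ici x, HasDerivAt k (k' y) y)
    (hk' : ∀ y ∈ Ioi x, k' y ≤ 0)
    (h0 : Tendsto k atTop (𝓝 0)) : 0 ≤ k x := by
  have hanti : AntitoneOn k (Ici x) := by
    apply antitoneOn_of_deriv_nonpos (convex_Ici x)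
    · exact fun y hy => (hd y hy).continuousAt.continuousWithinAt
    · intro y hy
      rw [interior_Ici] at hy
      exact (hd y (mem_Ici.mpr (le_of_lt hy))).differentiableAt.differentiableWithinAt
    · intro y hy
      rw [interior_Ici] at hy
      rw [(hd y (mem_Ici.mpr (le_of_lt hy))).deriv]
      exact hk' y hy
  refine le_of_tendsto h0 (eventually_atTop.mpr ⟨x, fun y hy => ?_⟩)
  exact hanti (mem_Ici.mpr le_rfl) (mem_Ici.mpr hy) hy

lemma monotoneOn_of_hasDerivAt_nonneg {k k' : ℝ → ℝ} {x : ℝ}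
    (hd : ∀ y ∈ Ici x, HasDerivAt k (k' y) y)
    (hk' : ∀ y ∈ Ioi x, 0 ≤ k' y) : MonotoneOn k (Ici x) := by
  apply monotoneOn_of_deriv_nonneg (convex_Ici x)
  · exact fun y hy => (hd y hy).continuousAt.continuousWithinAt
  · intro y hy
    rw [interior_Ici] at hy
    exact (hd y (mem_Ici.mpr (le_of_lt hy))).differentiableAt.differentiableWithinAt
  · intro y hy
    rw [interior_Ici] at hy
    rw [(hd y (mem_Ici.mpr (le_of_lt hy))).deriv]
    exact hk' y hy

lemma mills_upper {x : ℝ} (hx : 0 < x) : gaussTail x ≤ stdNormalPDF x / x := by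
  have key : 0 ≤ stdNormalPDF x / x - gaussTail x := by
    apply nonneg_of_deriv_nonpos_tendsto
      (k := fun y => stdNormalPDF y / y - gaussTail y)
      (k' := fun y => -stdNormalPDF y / y^2) (x := x)
    · intro y hy
      have hy0 : 0 < y := lt_of_lt_of_le hx hy
      have h1 : HasDerivAt (fun y => stdNormalPDF y / y) ((-y * stdNormalPDF y * y - stdNormalPDF y * 1) / y^2) y :=
        (hasDerivAt_pdf y).div (hasDerivAt_id y) (ne_of_gt hy0)
      have h2 := h1.sub (hasDerivAt_gaussTail y)
      refine h2.congr_deriv ?_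
      field_simp
      ring
    · intro y hy
      have hy0 : 0 < y := lt_trans hx hy
      have := pdf_pos y
      apply div_nonpos_of_nonpos_of_nonneg <;> nlinarith
    · have h1 : Tendsto (fun y : ℝ => stdNormalPDF y / y) atTop (𝓝 0) := by
        have := pdf_tendsto_atTop.div_atTop tendsto_id
        simpa using this
      simpa using h1.sub gaussTail_tendsto
  linarith

lemma mills_lower {x : ℝ} (hx : 0 < x) : x * stdNormalPDF x / (x^2+1) ≤ gaussTail x := by
  have key : 0 ≤ gaussTail x - x * stdNormalPDF x / (x^2+1) := by
    apply nonneg_of_deriv_nonpos_tendsto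
      (k := fun y => gaussTail y - y * stdNormalPDF y / (y^2+1))
      (k' := fun y => -2 * stdNormalPDF y / (y^2+1)^2) (x := x)
    · intro y _
      have hy1 : (y:ℝ)^2 + 1 ≠ 0 := by positivity
      have h1 : HasDerivAt (fun y : ℝ => y * stdNormalPDF y) (1 * stdNormalPDF y + y * (-y * stdNormalPDF y)) y :=
        (hasDerivAt_id y).mul (hasDerivAt_pdf y)
      have h2 : HasDerivAt (fun y : ℝ => y^2 + 1) (2*y) y := by
        simpa using (hasDerivAt_pow 2 y).add_const 1
      have h3 := (h1.div h2 hy1)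
      have h4 := (hasDerivAt_gaussTail y).sub h3
      refine h4.congr_deriv ?_
      field_simp
      ring
    · intro y _
      have := pdf_pos y
      have h1 : (0:ℝ) < (y^2+1)^2 := by positivity
      apply div_nonpos_of_nonpos_of_nonneg <;> nlinarith
    · have h1 : Tendsto (fun y : ℝ => y * stdNormalPDF y / (y^2+1)) atTop (𝓝 0) := by
        have heq : ∀ᶠ y in (atTop : Filter ℝ), y * stdNormalPDF y / (y^2+1) = stdNormalPDF y / ((y^2+1)/y) := by
          filter_upwards [eventually_gt_atTop 0] with y hy
          field_simp
        rw [tendsto_congr' heq]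
        apply pdf_tendsto_atTop.div_atTop
        apply tendsto_atTop_mono' atTop ?_ tendsto_id
        filter_upwards [eventually_gt_atTop (0:ℝ)] with y hy
        rw [le_div_iff₀ hy]
        simp only [id]
        nlinarith
      simpa using gaussTail_tendsto.sub h1
  linarith

lemma antitoneOn_Iic_of_hasDerivAt_nonpos {k k' : ℝ → ℝ} {x : ℝ}
    (hd : ∀ y ∈ Iic x, HasDerivAt k (k' y) y)
    (hk' : ∀ y ∈ Iio x, k' y ≤ 0) : AntitoneOn k (Iic x) := by
  apply antitoneOn_of_deriv_nonpos (convex_Iic x)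
  · exact fun y hy => (hd y hy).continuousAt.continuousWithinAt
  · intro y hy
    rw [interior_Iic] at hy
    exact (hd y (mem_Iic.mpr (le_of_lt hy))).differentiableAt.differentiableWithinAt
  · intro y hy
    rw [interior_Iic] at hy
    rw [(hd y (mem_Iic.mpr (le_of_lt hy))).deriv]
    exact hk' y hy

lemma monotoneOn_Icc_of_hasDerivAt_nonneg {k k' : ℝ → ℝ} {x x' : ℝ}
    (hd : ∀ y ∈ Icc x x', HasDerivAt k (k' y) y)
    (hk' : ∀ y ∈ Ioo x x', 0 ≤ k' y) : MonotoneOn k (Icc x x') := by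
  apply monotoneOn_of_deriv_nonneg (convex_Icc x x')
  · exact fun y hy => (hd y hy).continuousAt.continuousWithinAt
  · intro y hy
    rw [interior_Icc] at hy
    exact (hd y (Ioo_subset_Icc_self hy)).differentiableAt.differentiableWithinAt
  · intro y hy
    rw [interior_Icc] at hy
    rw [(hd y (Ioo_subset_Icc_self hy)).deriv]
    exact hk' y hy

noncomputable def psi (u : ℝ) : ℝ := stdNormalPDF u - u * gaussTail u

lemma hasDerivAt_psi (u : ℝ) : HasDerivAt psi (-gaussTail u) u := by
  have h1 := (hasDerivAt_pdf u).sub ((hasDerivAt_id u).mul (hasDerivAt_gaussTail u))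
  refine h1.congr_deriv ?_
  simp only [id]
  ring

lemma psi_tangent (z u : ℝ) : psi z - gaussTail z * (u - z) ≤ psi u := by
  set k : ℝ → ℝ := fun y => psi y - psi z + gaussTail z * (y - z) with hk
  have hd : ∀ y, HasDerivAt k (gaussTail z - gaussTail y) y := by
    intro y
    have h1 := ((hasDerivAt_psi y).sub_const (psi z)).add
      (((hasDerivAt_id y).sub_const z).const_mul (gaussTail z))
    refine h1.congr_deriv ?_
    ring
  have hknn : 0 ≤ k u := by
    rcases le_total z u with h | h
    · have hmono : MonotoneOn k (Ici z) := by
        apply monotoneOn_of_hasDerivAt_nonneg (fun y _ => hd y)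
        intro y hy
        exact sub_nonneg.mpr (gaussTail_anti (le_of_lt hy))
      have := hmono (mem_Ici.mpr le_rfl) (mem_Ici.mpr h) h
      simpa [hk] using this
    · have hanti : AntitoneOn k (Iic z) := by
        apply antitoneOn_Iic_of_hasDerivAt_nonpos (fun y _ => hd y)
        intro y hy
        exact sub_nonpos.mpr (gaussTail_anti (le_of_lt hy))
      have := hanti (mem_Iic.mpr h) (mem_Iic.mpr le_rfl) h
      simpa [hk] using this
  simp only [hk] at hknn
  linarith

lemma psi_nonneg (u : ℝ) : 0 ≤ psi u := by
  rcases le_or_gt u 0 with h | h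
  · have h1 := pdf_pos u
    have h2 := gaussTail_nonneg u
    simp only [psi]
    nlinarith
  · have h1 := mills_upper h
    simp only [psi]
    rw [div_eq_mul_inv] at h1
    have h2 : u * gaussTail u ≤ stdNormalPDF u := by
      calc u * gaussTail u ≤ u * (stdNormalPDF u * u⁻¹) :=
        mul_le_mul_of_nonneg_left h1 h.le
      _ = stdNormalPDF u := by field_simp
    linarith

lemma psi_tendsto : Tendsto psi atTop (𝓝 0) := by
  apply tendsto_of_tendsto_of_tendsto_of_le_of_le' tendsto_const_nhds pdf_tendsto_atTop
  · exact Eventually.of_forall fun u => psi_nonneg u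
  · filter_upwards [eventually_ge_atTop (0:ℝ)] with u hu
    have h1 := gaussTail_nonneg u
    simp only [psi]
    nlinarith

lemma stdNormalPDF_eq_gaussian : stdNormalPDF = gaussianPDFReal 0 1 := by
  funext x
  simp [stdNormalPDF, gaussianPDFReal, mul_comm]

lemma integral_pdf_one : ∫ x, stdNormalPDF x = 1 := by
  rw [stdNormalPDF_eq_gaussian]
  exact integral_gaussianPDFReal_eq_one 0 one_ne_zero

lemma pdf_even (x : ℝ) : stdNormalPDF (-x) = stdNormalPDF x := by
  simp [stdNormalPDF, neg_sq]

lemma gaussTail_neg (u : ℝ) : gaussTail (-u) = 1 - gaussTail u := by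
  have hsplit : gaussTail (-u) + ∫ x in Iic (-u), stdNormalPDF x = 1 := by
    rw [gaussTail, ← integral_pdf_one,
      ← integral_add_compl (measurableSet_Ioi (a := -u)) integrable_pdf, compl_Ioi]
  have hrefl : ∫ x in Iic (-u), stdNormalPDF x = gaussTail u := by
    rw [← integral_comp_neg_Ioi]
    simp_rw [pdf_even]
    rfl
  linarith [hsplit, hrefl]

/-! ### Numeric bounds -/

lemma exp_neg_lb (c : ℝ) (n : ℕ) (hn : 0 < n) (hc : 0 ≤ c) (hcn : c ≤ n) :
    (1 - c/n)^n ≤ Real.exp (-c) := by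
  have hn' : (0:ℝ) < n := Nat.cast_pos.mpr hn
  have h1 : 1 - c/n ≤ Real.exp (-(c/n)) := by
    have := Real.add_one_le_exp (-(c/n)); linarith
  have h2 : (0:ℝ) ≤ 1 - c/n := by
    rw [sub_nonneg, div_le_one hn']; exact hcn
  calc (1 - c/n)^n ≤ (Real.exp (-(c/n)))^n := pow_le_pow_left₀ h2 h1 n
    _ = Real.exp (-c) := by
      rw [← Real.exp_nat_mul]; congr 1; field_simp

lemma sqrt2log2_ge : 1.1774 ≤ Real.sqrt (2 * Real.log 2) := by
  rw [show (1.1774:ℝ) = Real.sqrt (1.1774^2) by rw [Real.sqrt_sq (by norm_num)]]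
  apply Real.sqrt_le_sqrt
  nlinarith [Real.log_two_gt_d9]

lemma sqrt2log2_le : Real.sqrt (2 * Real.log 2) ≤ 1.1775 := by
  rw [show (1.1775:ℝ) = Real.sqrt (1.1775^2) by rw [Real.sqrt_sq (by norm_num)]]
  apply Real.sqrt_le_sqrt
  nlinarith [Real.log_two_lt_d9]

lemma block_lb {u v : ℝ} (hu : 0 ≤ u) (huv : u ≤ v) :
    (v - u) * Real.exp (-v^2/2) ≤ ∫ t in Ioc u v, Real.exp (-t^2/2) := by
  have h1 : ∀ t ∈ Ioc u v, Real.exp (-v^2/2) ≤ Real.exp (-t^2/2) := by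
    intro t ht
    apply Real.exp_le_exp.mpr
    nlinarith [ht.1, ht.2]
  calc (v - u) * Real.exp (-v^2/2)
      = ∫ _ in Ioc u v, Real.exp (-v^2/2) := by
        rw [setIntegral_const, Real.volume_real_Ioc_of_le (by linarith),
          smul_eq_mul]
    _ ≤ ∫ t in Ioc u v, Real.exp (-t^2/2) := by
        apply setIntegral_mono_on (integrableOn_const (by
          rw [Real.volume_Ioc]; exact ENNReal.ofReal_ne_top))
          (integrable_expNegSq.integrableOn) measurableSet_Ioc h1

lemma tailE_eq (x : ℝ) :
    ∫ t in Ioi x, Real.exp (-t^2/2) = Real.sqrt (2*Real.pi) * gaussTail x := by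
  have hs : (0:ℝ) < Real.sqrt (2*Real.pi) := Real.sqrt_pos.mpr (by positivity)
  rw [gaussTail, ← integral_const_mul]
  apply setIntegral_congr_fun measurableSet_Ioi
  intro t _
  show Real.exp (-t^2/2) = Real.sqrt (2*Real.pi) * stdNormalPDF t
  rw [show stdNormalPDF t = (Real.sqrt (2 * Real.pi))⁻¹ * Real.exp (-t ^ 2 / 2) from rfl]
  field_simp

lemma split_Ioc {u v w : ℝ} (h1 : u ≤ v) (h2 : v ≤ w) :
    ∫ t in Ioc u w, Real.exp (-t^2/2)
      = (∫ t in Ioc u v, Real.exp (-t^2/2)) + ∫ t in Ioc v w, Real.exp (-t^2/2) := by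
  rw [← Ioc_union_Ioc_eq_Ioc h1 h2]
  exact setIntegral_union (Ioc_disjoint_Ioc_of_le le_rfl) measurableSet_Ioc
    integrable_expNegSq.integrableOn integrable_expNegSq.integrableOn

lemma tailE_lb : 0.1735 ≤ ∫ t in Ioi (Real.sqrt (2 * Real.log 2)), Real.exp (-t^2/2) := by
  have hsub : Ioc (1.1775:ℝ) 2.5 ⊆ Ioi (Real.sqrt (2 * Real.log 2)) := by
    intro t ht
    exact lt_of_le_of_lt sqrt2log2_le ht.1
  have hmono : ∫ t in Ioc (1.1775:ℝ) 2.5, Real.exp (-t^2/2)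
      ≤ ∫ t in Ioi (Real.sqrt (2 * Real.log 2)), Real.exp (-t^2/2) := by
    apply setIntegral_mono_set integrable_expNegSq.integrableOn
      (Eventually.of_forall fun t => (Real.exp_pos _).le)
      (HasSubset.Subset.eventuallyLE hsub)
  have hsplit : ∫ t in Ioc (1.1775:ℝ) 2.5, Real.exp (-t^2/2)
      = (∫ t in Ioc (1.1775:ℝ) 1.5, Real.exp (-t^2/2))
        + ((∫ t in Ioc (1.5:ℝ) 2, Real.exp (-t^2/2))
          + ∫ t in Ioc (2:ℝ) 2.5, Real.exp (-t^2/2)) := by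
    rw [split_Ioc (by norm_num : (1.1775:ℝ) ≤ 1.5) (by norm_num : (1.5:ℝ) ≤ 2.5),
      split_Ioc (by norm_num : (1.5:ℝ) ≤ 2) (by norm_num : (2:ℝ) ≤ 2.5)]
  have hb1 : (0.3225:ℝ) * Real.exp (-(1.5:ℝ)^2/2) ≤ ∫ t in Ioc (1.1775:ℝ) 1.5, Real.exp (-t^2/2) := by
    have := block_lb (by norm_num : (0:ℝ) ≤ 1.1775) (by norm_num : (1.1775:ℝ) ≤ 1.5)
    convert this using 2
    norm_num
  have hb2 := block_lb (by norm_num : (0:ℝ) ≤ 1.5) (by norm_num : (1.5:ℝ) ≤ 2)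
  have hb3 := block_lb (by norm_num : (0:ℝ) ≤ 2) (by norm_num : (2:ℝ) ≤ 2.5)
  have he1 : (0.2974:ℝ) ≤ Real.exp (-(1.5:ℝ)^2/2) := by
    have := exp_neg_lb (9/8) 8 (by norm_num) (by norm_num) (by norm_num)
    have heq : -(1.5:ℝ)^2/2 = -(9/8) := by norm_num
    rw [heq]
    refine le_trans ?_ this
    norm_num
  have he2 : (0.118:ℝ) ≤ Real.exp (-(2:ℝ)^2/2) := by
    have := exp_neg_lb 2 16 (by norm_num) (by norm_num) (by norm_num)
    have heq : -(2:ℝ)^2/2 = -2 := by norm_num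
    rw [heq]
    refine le_trans ?_ this
    norm_num
  have he3 : (0.0373:ℝ) ≤ Real.exp (-(2.5:ℝ)^2/2) := by
    have := exp_neg_lb (25/8) 32 (by norm_num) (by norm_num) (by norm_num)
    have heq : -(2.5:ℝ)^2/2 = -(25/8) := by norm_num
    rw [heq]
    refine le_trans ?_ this
    norm_num
  nlinarith [hb1, hb2, hb3, he1, he2, he3, hmono, hsplit]

lemma Bconst_lb : 0.7622 ≤ Bconst := by
  rw [Bconst]
  have h1 := sqrt2log2_ge
  have h2 := tailE_lb
  linarith

lemma pdf_le (x : ℝ) : stdNormalPDF x ≤ 0.399 := by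
  rw [stdNormalPDF]
  have hpi : (6.283184:ℝ) ≤ 2 * Real.pi := by
    have := Real.pi_gt_d6
    linarith
  have hsq : (2.50627:ℝ) ≤ Real.sqrt (2*Real.pi) := by
    rw [show (2.50627:ℝ) = Real.sqrt (2.50627^2) by rw [Real.sqrt_sq (by norm_num)]]
    apply Real.sqrt_le_sqrt
    nlinarith
  have hs : (0:ℝ) < Real.sqrt (2*Real.pi) := by linarith
  have hexp : Real.exp (-x^2/2) ≤ 1 := by
    rw [show (1:ℝ) = Real.exp 0 by simp]
    apply Real.exp_le_exp.mpr
    nlinarith [sq_nonneg x]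
  have hinv : (Real.sqrt (2*Real.pi))⁻¹ ≤ 0.399 := by
    rw [inv_le_comm₀ hs (by norm_num)]
    calc (0.399:ℝ)⁻¹ ≤ 2.50627 := by norm_num
      _ ≤ _ := hsq
  calc (Real.sqrt (2*Real.pi))⁻¹ * Real.exp (-x^2/2) ≤ (Real.sqrt (2*Real.pi))⁻¹ * 1 := by
        apply mul_le_mul_of_nonneg_left hexp (by positivity)
    _ ≤ 0.399 := by simpa using hinv

/-! ### The Gaussian stop-loss function -/

noncomputable def gfun (c₀ t : ℝ) : ℝ :=
  c₀ * stdNormalPDF (t/c₀) - t * gaussTail (t/c₀)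

lemma gfun_eq_psi {c₀ : ℝ} (hc₀ : c₀ ≠ 0) (t : ℝ) : gfun c₀ t = c₀ * psi (t/c₀) := by
  rw [gfun, psi]
  field_simp

lemma tangent_bound {z c₀ : ℝ} (hc₀pos : 0 < c₀)
    (hcB : Bconst = c₀ * stdNormalPDF z) (t : ℝ) :
    Bconst - gaussTail z * t ≤ gfun c₀ t := by
  have h := psi_tangent z (t/c₀)
  have h2 := mul_le_mul_of_nonneg_left h hc₀pos.le
  rw [gfun_eq_psi (ne_of_gt hc₀pos)]
  have h3 : c₀ * (t/c₀) = t := by field_simp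
  calc Bconst - gaussTail z * t
      = c₀ * (psi z - gaussTail z * (t/c₀ - z)) := by
        rw [psi, hcB]; field_simp; ring
    _ ≤ c₀ * psi (t/c₀) := h2

lemma gfun_reflect {c₀ : ℝ} (hc₀ : c₀ ≠ 0) (t : ℝ) : gfun c₀ t = -t + gfun c₀ (-t) := by
  rw [gfun, gfun, neg_div, gaussTail_neg, pdf_even]
  ring

lemma hasDerivAt_gfun {c₀ : ℝ} (hc₀ : c₀ ≠ 0) (t : ℝ) :
    HasDerivAt (gfun c₀) (-gaussTail (t/c₀)) t := by
  have h1 : HasDerivAt (fun t : ℝ => t/c₀) (1/c₀) t := by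
    simpa using (hasDerivAt_id t).div_const c₀
  have h2 : HasDerivAt (fun t : ℝ => stdNormalPDF (t/c₀))
      (-(t/c₀) * stdNormalPDF (t/c₀) * (1/c₀)) t :=
    by have := (hasDerivAt_pdf (t/c₀)).comp t h1; exact this
  have h3 : HasDerivAt (fun t : ℝ => gaussTail (t/c₀)) (-stdNormalPDF (t/c₀) * (1/c₀)) t :=
    by have := (hasDerivAt_gaussTail (t/c₀)).comp t h1; exact this
  have h4 := (h2.const_mul c₀).sub ((hasDerivAt_id t).mul h3)
  refine h4.congr_deriv ?_
  simp only [id]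
  field_simp
  ring

/-- The key comparison on `[a, ∞)`: the scaled Gaussian stop-loss dominates the tail. -/
lemma tail_le_gfun {a c₀ : ℝ} (hc₀pos : 0 < c₀) (hapos : 0 < a)
    (hnum : ∀ t, a ≤ t → 1 ≤ t^2 * (1 - 1/c₀^2))
    (hDa : 0 ≤ gfun c₀ a - 2 * Real.sqrt (2*Real.pi) * gaussTail a) :
    ∀ t, a ≤ t → 2 * Real.sqrt (2*Real.pi) * gaussTail t ≤ gfun c₀ t := by
  have hc₀ : c₀ ≠ 0 := ne_of_gt hc₀pos
  set s2π := Real.sqrt (2*Real.pi) with hs2π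
  have hs2πpos : 0 < s2π := Real.sqrt_pos.mpr (by positivity)
  set D : ℝ → ℝ := fun t => gfun c₀ t - 2*s2π*gaussTail t with hD
  set Gm : ℝ → ℝ := fun t => gaussTail (t/c₀) * Real.exp (t^2/2) with hGm
  set W : ℝ → ℝ := fun t => Real.exp (-t^2/2) * (2 - Gm t) with hWdef
  have hpdf_exp : ∀ t : ℝ, s2π * stdNormalPDF t = Real.exp (-t^2/2) := by
    intro t
    rw [show stdNormalPDF t = (Real.sqrt (2 * Real.pi))⁻¹ * Real.exp (-t ^ 2 / 2) from rfl]
    rw [hs2π]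
    field_simp
  have hexpmul : ∀ t : ℝ, Real.exp (-t^2/2) * Real.exp (t^2/2) = 1 := by
    intro t
    rw [← Real.exp_add, show -t^2/2 + t^2/2 = 0 by ring, Real.exp_zero]
  have hDderiv : ∀ t, HasDerivAt D (W t) t := by
    intro t
    have h1 := (hasDerivAt_gfun hc₀ t).sub ((hasDerivAt_gaussTail t).const_mul (2*s2π))
    have heq : W t = -gaussTail (t/c₀) - 2*s2π * -stdNormalPDF t := by
      rw [hWdef]
      simp only
      rw [mul_sub, hGm]
      simp only
      have : Real.exp (-t^2/2) * (gaussTail (t/c₀) * Real.exp (t^2/2))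
          = gaussTail (t/c₀) * (Real.exp (-t^2/2) * Real.exp (t^2/2)) := by ring
      rw [this, hexpmul t, mul_one]
      have h2 := hpdf_exp t
      nlinarith [h2]
    rw [heq]
    exact h1
  have hGmderiv : ∀ t, HasDerivAt Gm
      (Real.exp (t^2/2) * (t * gaussTail (t/c₀) - stdNormalPDF (t/c₀) / c₀)) t := by
    intro t
    have h1 : HasDerivAt (fun t : ℝ => t/c₀) (1/c₀) t := by
      simpa using (hasDerivAt_id t).div_const c₀
    have h3 : HasDerivAt (fun t : ℝ => gaussTail (t/c₀)) (-stdNormalPDF (t/c₀) * (1/c₀)) t :=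
      by have := (hasDerivAt_gaussTail (t/c₀)).comp t h1; exact this
    have h4 : HasDerivAt (fun t : ℝ => t^2/2) t t := by
      simpa using (hasDerivAt_pow 2 t).div_const 2
    have h5 : HasDerivAt (fun t : ℝ => Real.exp (t^2/2)) (Real.exp (t^2/2) * t) t := h4.exp
    have h6 := h3.mul h5
    refine h6.congr_deriv ?_
    field_simp
    ring
  have hGmmono : MonotoneOn Gm (Ici a) := by
    apply monotoneOn_of_hasDerivAt_nonneg (fun y _ => hGmderiv y)
    intro y hy
    have hya : a < y := hy
    have hy0 : 0 < y := lt_trans hapos hya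
    have hu : 0 < y/c₀ := by positivity
    have hnum' := hnum y hya.le
    set u := y/c₀ with hu'
    have hpdfpos := pdf_pos u
    have htailnn := gaussTail_nonneg u
    have hu2 : (0:ℝ) < u^2 + 1 := by positivity
    have hml : u * stdNormalPDF u ≤ gaussTail u * (u^2+1) := by
      have h7 := mills_lower hu
      rw [div_le_iff₀ hu2] at h7
      linarith
    have h1 : y * c₀ * (u * stdNormalPDF u) ≤ y * c₀ * (gaussTail u * (u^2+1)) :=
      mul_le_mul_of_nonneg_left hml (by positivity)
    have hyc : y * c₀ * u = y^2 := by rw [hu']; field_simp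
    have hsq : u^2 + 1 ≤ y^2 := by
      have hueq : u^2 = y^2 / c₀^2 := by rw [hu', div_pow]
      have hc2 : (0:ℝ) < c₀^2 := by positivity
      rw [hueq]
      have : y^2 * (1 - 1/c₀^2) = y^2 - y^2/c₀^2 := by field_simp
      linarith [hnum']
    apply mul_nonneg (Real.exp_pos _).le
    rw [sub_nonneg, div_le_iff₀ hc₀pos]
    nlinarith [h1, hsq, hpdfpos, hu2, hyc, htailnn, mul_le_mul_of_nonneg_left hsq hpdfpos.le]
  have htendD : Tendsto D atTop (𝓝 0) := by
    have h1 : Tendsto (fun t : ℝ => t/c₀) atTop atTop :=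
      tendsto_id.atTop_div_const hc₀pos
    have h2 : Tendsto (fun t : ℝ => gfun c₀ t) atTop (𝓝 0) := by
      have h3 := (psi_tendsto.comp h1).const_mul c₀
      rw [mul_zero] at h3
      refine h3.congr fun t => ?_
      rw [Function.comp_apply, ← gfun_eq_psi hc₀]
    have h4 := (gaussTail_tendsto.const_mul (2*s2π))
    rw [mul_zero] at h4
    have h5 := h2.sub h4
    rw [sub_zero] at h5
    exact h5
  intro t hta
  rcases le_or_gt 2 (Gm t) with hcase | hcase
  · have hDnn : 0 ≤ D t := by
      apply nonneg_of_deriv_nonpos_tendsto (k := D) (k' := W) (x := t)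
        (fun y _ => hDderiv y) ?_ htendD
      intro y hy
      have hGy : Gm t ≤ Gm y :=
        hGmmono (mem_Ici.mpr hta) (mem_Ici.mpr (hta.trans (le_of_lt hy))) (le_of_lt hy)
      rw [hWdef]
      simp only
      apply mul_nonpos_of_nonneg_of_nonpos (Real.exp_pos _).le
      linarith
    simpa [hD] using hDnn
  · have hmono : MonotoneOn D (Icc a t) := by
      apply monotoneOn_Icc_of_hasDerivAt_nonneg (fun y _ => hDderiv y)
      intro y hy
      have hGy : Gm y ≤ Gm t :=
        hGmmono (mem_Ici.mpr hy.1.le) (mem_Ici.mpr hta) hy.2.le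
      rw [hWdef]
      simp only
      apply mul_nonneg (Real.exp_pos _).le
      linarith
    have hDt : D a ≤ D t :=
      hmono (mem_Icc.mpr ⟨le_rfl, hta⟩) (mem_Icc.mpr ⟨hta, le_rfl⟩) hta
    have : 0 ≤ D t := le_trans hDa hDt
    simpa [hD] using this

/-! ### Integrals against the Gaussian measure -/

lemma gaussianReal_eq :
    gaussianReal 0 1 = volume.withDensity (fun x => ENNReal.ofReal (stdNormalPDF x)) := by
  rw [gaussianReal_of_var_ne_zero 0 one_ne_zero]
  congr 1
  funext x
  rw [gaussianPDF, ← stdNormalPDF_eq_gaussian]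

lemma integral_gaussian_eq (h : ℝ → ℝ) :
    ∫ x, h x ∂(gaussianReal 0 1) = ∫ x, h x * stdNormalPDF x := by
  rw [gaussianReal_eq]
  have hmeas : Measurable fun x => (stdNormalPDF x).toNNReal := cont_pdf.measurable.real_toNNReal
  have heq : (fun x => ENNReal.ofReal (stdNormalPDF x))
      = fun x => ((stdNormalPDF x).toNNReal : ENNReal) := rfl
  rw [heq, integral_withDensity_eq_integral_smul hmeas]
  congr 1; funext x
  rw [NNReal.smul_def, Real.coe_toNNReal _ (pdf_pos x).le, smul_eq_mul, mul_comm]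

lemma integrable_gaussian_iff (h : ℝ → ℝ) :
    Integrable h (gaussianReal 0 1) ↔ Integrable (fun x => h x * stdNormalPDF x) := by
  rw [gaussianReal_eq]
  have hmeas : Measurable fun x => (stdNormalPDF x).toNNReal := cont_pdf.measurable.real_toNNReal
  have heq : (fun x => ENNReal.ofReal (stdNormalPDF x))
      = fun x => ((stdNormalPDF x).toNNReal : ENNReal) := rfl
  rw [heq, integrable_withDensity_iff_integrable_smul hmeas]
  constructor <;> intro hh <;> refine hh.congr (Eventually.of_forall fun x => ?_) <;>
    simp only [NNReal.smul_def, Real.coe_toNNReal _ (pdf_pos x).le, smul_eq_mul, mul_comm]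

lemma integrable_xpdf : Integrable (fun x : ℝ => x * stdNormalPDF x) := by
  have hint : Integrable (fun x : ℝ => (Real.sqrt (2*Real.pi))⁻¹ * Real.exp (-(1/4) * x^2)) :=
    (integrable_exp_neg_mul_sq (by norm_num : (0:ℝ) < 1/4)).const_mul _
  apply hint.mono ((continuous_id.mul cont_pdf).aestronglyMeasurable)
  refine Eventually.of_forall fun x => ?_
  have hs : (0:ℝ) < (Real.sqrt (2*Real.pi))⁻¹ := by
    have := Real.sqrt_pos.mpr (show (0:ℝ) < 2*Real.pi by positivity)
    positivity
  have hxb : |x| ≤ Real.exp (x^2/4) := by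
    have h := Real.add_one_le_exp (x^2/4)
    nlinarith [sq_abs x, sq_nonneg (|x| - 2), abs_nonneg x]
  have hpdf : stdNormalPDF x = (Real.sqrt (2*Real.pi))⁻¹ * Real.exp (-x^2/2) := rfl
  rw [Real.norm_eq_abs, Real.norm_eq_abs, Pi.mul_apply, id_eq, abs_mul, abs_of_pos (pdf_pos x), hpdf]
  have hmulexp : Real.exp (x^2/4) * Real.exp (-x^2/2) = Real.exp (-(1/4)*x^2) := by
    rw [← Real.exp_add]; congr 1; ring
  have habs : |(Real.sqrt (2*Real.pi))⁻¹ * Real.exp (-(1/4)*x^2)|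
      = (Real.sqrt (2*Real.pi))⁻¹ * Real.exp (-(1/4)*x^2) := by
    apply abs_of_pos; positivity
  rw [habs]
  calc |x| * ((Real.sqrt (2*Real.pi))⁻¹ * Real.exp (-x^2/2))
      ≤ Real.exp (x^2/4) * ((Real.sqrt (2*Real.pi))⁻¹ * Real.exp (-x^2/2)) := by
        apply mul_le_mul_of_nonneg_right hxb (by positivity)
    _ = (Real.sqrt (2*Real.pi))⁻¹ * (Real.exp (x^2/4) * Real.exp (-x^2/2)) := by ring
    _ = (Real.sqrt (2*Real.pi))⁻¹ * Real.exp (-(1/4)*x^2) := by rw [hmulexp]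

lemma int_xpdf_Ioi (u : ℝ) : ∫ x in Ioi u, x * stdNormalPDF x = stdNormalPDF u := by
  have key := integral_Ioi_of_hasDerivAt_of_tendsto (f := fun x => -stdNormalPDF x)
    (f' := fun x => x * stdNormalPDF x) (a := u) (m := 0)
    (cont_pdf.neg.continuousWithinAt)
    (fun x _ => ((hasDerivAt_pdf x).neg).congr_deriv (by ring))
    (integrable_xpdf.integrableOn)
    (by simpa using pdf_tendsto_atTop.neg)
  rw [key]; ring

lemma int_xpdf_Iic (u : ℝ) : ∫ x in Iic u, x * stdNormalPDF x = -stdNormalPDF u := by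
  have key := integral_Iic_of_hasDerivAt_of_tendsto (f := fun x => -stdNormalPDF x)
    (f' := fun x => x * stdNormalPDF x) (a := u) (m := 0)
    (cont_pdf.neg.continuousWithinAt)
    (fun x _ => ((hasDerivAt_pdf x).neg).congr_deriv (by ring))
    (integrable_xpdf.integrableOn)
    (by simpa using pdf_tendsto_atBot.neg)
  rw [key]; ring

lemma integral_id_gauss : ∫ x, x ∂(gaussianReal 0 1) = 0 := by
  rw [integral_gaussian_eq]
  have h := integral_add_compl (measurableSet_Ioi (a := (0:ℝ))) integrable_xpdf
  rw [compl_Ioi] at h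
  rw [← h, int_xpdf_Ioi, int_xpdf_Iic]
  ring

lemma integrable_id_gauss : Integrable id (gaussianReal 0 1) :=
  (integrable_gaussian_iff _).mpr integrable_xpdf

lemma integral_ramp_gauss {c₀ : ℝ} (hc₀pos : 0 < c₀) (t : ℝ) :
    ∫ x, max (c₀ * x - t) 0 ∂(gaussianReal 0 1) = gfun c₀ t := by
  rw [integral_gaussian_eq]
  have hfun : (fun x => max (c₀ * x - t) 0 * stdNormalPDF x)
      = (Ioi (t/c₀)).indicator (fun x => (c₀ * x - t) * stdNormalPDF x) := by
    funext x
    rcases lt_or_ge (t/c₀) x with h | h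
    · rw [indicator_of_mem (mem_Ioi.mpr h)]
      have h2 : 0 ≤ c₀ * x - t := by
        rw [div_lt_iff₀ hc₀pos] at h
        linarith [h]
      rw [max_eq_left h2]
    · rw [indicator_of_notMem (by simpa using h)]
      have h2 : c₀ * x - t ≤ 0 := by
        rw [le_div_iff₀ hc₀pos] at h
        nlinarith
      rw [max_eq_right h2, zero_mul]
  rw [hfun, integral_indicator measurableSet_Ioi]
  have hsplit : (fun x => (c₀ * x - t) * stdNormalPDF x)
      = fun x => c₀ * (x * stdNormalPDF x) - t * stdNormalPDF x := by
    funext x; ring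
  rw [hsplit, integral_sub ((integrable_xpdf.const_mul c₀).integrableOn)
    ((integrable_pdf.const_mul t).integrableOn),
    integral_const_mul, integral_const_mul, int_xpdf_Ioi]
  rfl

/-! ### Part B: the X side -/

section Xside

variable {Ω : Type*} [MeasurableSpace Ω] {μ : Measure Ω} [IsProbabilityMeasure μ]
variable {X : Ω → ℝ}

/-- upper tail probability -/
noncomputable def qf (μ : Measure Ω) (X : Ω → ℝ) (t : ℝ) : ℝ := (μ {ω | t < X ω}).toReal

lemma qf_anti : Antitone (qf μ X) := by
  intro s t hst
  apply ENNReal.toReal_mono (measure_ne_top μ _)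
  exact measure_mono fun ω hω => lt_of_le_of_lt hst hω

lemma qf_nonneg (t : ℝ) : 0 ≤ qf μ X t := ENNReal.toReal_nonneg

lemma qf_meas : Measurable (qf μ X) := (qf_anti (μ := μ) (X := X)).measurable

lemma stoploss_eq (hXint : Integrable X μ) (t : ℝ) :
    ∫ ω, max (X ω - t) 0 ∂μ = ∫ s in Ioi t, qf μ X s := by
  have hint : Integrable (fun ω => max (X ω - t) 0) μ := by
    simpa [Pi.sup_def] using (hXint.sub (integrable_const t)).sup (integrable_const (0:ℝ))
  rw [hint.integral_eq_integral_meas_lt (Eventually.of_forall fun ω => le_max_right _ _)]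
  have hset : ∀ u ∈ Ioi (0:ℝ),
      μ.real {a | u < max (X a - t) 0} = qf μ X (t + u) := by
    intro u hu
    have : {a | u < max (X a - t) 0} = {ω | t + u < X ω} := by
      ext a
      simp only [mem_setOf_eq, lt_max_iff]
      constructor
      · rintro (h | h)
        · linarith
        · exact absurd h (not_lt.mpr (le_of_lt hu))
      · intro h; left; linarith
    rw [this]; rfl
  rw [setIntegral_congr_fun measurableSet_Ioi hset]
  rw [← integral_indicator measurableSet_Ioi, ← integral_indicator measurableSet_Ioi]
  have hind : (Ioi (0:ℝ)).indicator (fun u => qf μ X (t + u))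
      = fun u => (Ioi t).indicator (qf μ X) (t + u) := by
    funext u
    by_cases h : 0 < u
    · rw [indicator_of_mem (mem_Ioi.mpr h), indicator_of_mem (mem_Ioi.mpr (by linarith))]
    · rw [indicator_of_notMem (by simpa using h),
        indicator_of_notMem (by simp only [mem_Ioi, not_lt] at h ⊢; linarith)]
  rw [hind]
  exact integral_add_left_eq_self _ t

lemma qf_sum_le
    (hXint : Integrable X μ)
    (htail : ∀ t : ℝ, 0 ≤ t →
      μ {ω | t < |X ω|} ≤ ENNReal.ofReal (min 1 (2 * Real.exp (-t ^ 2 / 2))))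
    {s : ℝ} (hs : 0 ≤ s) :
    qf μ X s + qf μ (fun ω => -X ω) s ≤ min 1 (2 * Real.exp (-s^2/2)) := by
  have hXm : AEMeasurable X μ := hXint.aemeasurable
  have hA : NullMeasurableSet {ω | s < X ω} μ := by
    have : {ω | s < X ω} = X ⁻¹' (Ioi s) := rfl
    rw [this]
    exact hXm.nullMeasurableSet_preimage measurableSet_Ioi
  have hB : NullMeasurableSet {ω | s < -X ω} μ := by
    have : {ω | s < -X ω} = X ⁻¹' (Iio (-s)) := by
      ext ω; simp [lt_neg]
    rw [this]
    exact hXm.nullMeasurableSet_preimage measurableSet_Iio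
  have hdisj : Disjoint {ω | s < X ω} {ω | s < -X ω} := by
    rw [disjoint_left]
    intro ω h1 h2
    simp only [mem_setOf_eq] at h1 h2
    linarith
  have hunion : {ω | s < X ω} ∪ {ω | s < -X ω} = {ω | s < |X ω|} := by
    ext ω
    simp only [mem_union, mem_setOf_eq, lt_abs]
  have hadd : μ {ω | s < X ω} + μ {ω | s < -X ω} = μ {ω | s < |X ω|} := by
    rw [← measure_union₀ hB hdisj.aedisjoint, hunion]
  have hle := htail s hs
  have hmin_nn : 0 ≤ min 1 (2 * Real.exp (-s^2/2)) := by positivity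
  have h1 : qf μ X s + qf μ (fun ω => -X ω) s = (μ {ω | s < |X ω|}).toReal := by
    rw [qf, qf, ← ENNReal.toReal_add (measure_ne_top μ _) (measure_ne_top μ _), hadd]
  rw [h1]
  calc (μ {ω | s < |X ω|}).toReal
      ≤ (ENNReal.ofReal (min 1 (2 * Real.exp (-s^2/2)))).toReal :=
        ENNReal.toReal_mono ENNReal.ofReal_ne_top hle
    _ = min 1 (2 * Real.exp (-s^2/2)) := ENNReal.toReal_ofReal hmin_nn

lemma integrableOn_min_exp : IntegrableOn (fun s : ℝ => min 1 (2 * Real.exp (-s^2/2))) (Ioi 0) := by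
  apply Integrable.integrableOn
  apply (integrable_expNegSq.const_mul 2).mono
    ((continuous_const.min (continuous_const.mul (by fun_prop))).aestronglyMeasurable)
  refine Eventually.of_forall fun s => ?_
  rw [Real.norm_eq_abs, Real.norm_eq_abs]
  simp only [Pi.mul_apply]
  have h1 : (0:ℝ) < 2 * Real.exp (-s^2/2) := by positivity
  rw [abs_of_pos (lt_min one_pos h1), abs_of_pos h1]
  exact min_le_right _ _

lemma qf_integrableOn
    (hXint : Integrable X μ)
    (htail : ∀ t : ℝ, 0 ≤ t →
      μ {ω | t < |X ω|} ≤ ENNReal.ofReal (min 1 (2 * Real.exp (-t ^ 2 / 2))))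
    {c : ℝ} (hc : 0 ≤ c) : IntegrableOn (qf μ X) (Ioi c) := by
  have hsub : IntegrableOn (fun s : ℝ => min 1 (2 * Real.exp (-s^2/2))) (Ioi c) :=
    integrableOn_min_exp.mono_set fun s hs => mem_Ioi.mpr (lt_of_le_of_lt hc hs)
  apply MeasureTheory.Integrable.mono hsub (qf_meas.aestronglyMeasurable)
  refine (ae_restrict_iff' measurableSet_Ioi).mpr (Eventually.of_forall fun s hs => ?_)
  have hs0 : (0:ℝ) ≤ s := le_of_lt (lt_of_le_of_lt hc hs)
  have h1 := qf_sum_le hXint htail hs0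
  have h2 := qf_nonneg (μ := μ) (X := fun ω => -X ω) s
  rw [Real.norm_eq_abs, abs_of_nonneg (qf_nonneg s), Real.norm_eq_abs,
    abs_of_nonneg (le_min zero_le_one (by positivity))]
  linarith

end Xside

lemma min_integral_eq :
    ∫ s in Ioi (0:ℝ), min 1 (2 * Real.exp (-s^2/2)) = 2 * Bconst := by
  set t₀ := Real.sqrt (2 * Real.log 2) with ht₀
  have ht₀pos : 0 < t₀ := lt_of_lt_of_le (by norm_num) sqrt2log2_ge
  have ht₀sq : t₀^2 = 2 * Real.log 2 := Real.sq_sqrt (by positivity)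
  have hint1 : IntegrableOn (fun s : ℝ => min 1 (2 * Real.exp (-s^2/2))) (Ioc 0 t₀) :=
    integrableOn_min_exp.mono_set Ioc_subset_Ioi_self
  have hint2 : IntegrableOn (fun s : ℝ => min 1 (2 * Real.exp (-s^2/2))) (Ioi t₀) :=
    integrableOn_min_exp.mono_set fun s hs => mem_Ioi.mpr (lt_trans ht₀pos hs)
  rw [← Ioc_union_Ioi_eq_Ioi ht₀pos.le,
    setIntegral_union (Ioc_disjoint_Ioi le_rfl) measurableSet_Ioi hint1 hint2]
  have h1 : ∀ s ∈ Ioc (0:ℝ) t₀, min 1 (2 * Real.exp (-s^2/2)) = 1 := by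
    intro s hs
    apply min_eq_left
    have hs2 : s^2 ≤ 2 * Real.log 2 := by nlinarith [hs.1, hs.2, ht₀sq]
    have hh : Real.exp (-Real.log 2) ≤ Real.exp (-s^2/2) := Real.exp_le_exp.mpr (by linarith)
    rw [Real.exp_neg, Real.exp_log two_pos] at hh
    linarith
  have h2 : ∀ s ∈ Ioi t₀, min 1 (2 * Real.exp (-s^2/2)) = 2 * Real.exp (-s^2/2) := by
    intro s hs
    apply min_eq_right
    have hst : t₀ < s := hs
    have hs2 : 2 * Real.log 2 ≤ s^2 := by nlinarith [ht₀pos]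
    have hh : Real.exp (-s^2/2) ≤ Real.exp (-Real.log 2) := Real.exp_le_exp.mpr (by linarith)
    rw [Real.exp_neg, Real.exp_log two_pos] at hh
    linarith
  rw [setIntegral_congr_fun measurableSet_Ioc h1, setIntegral_congr_fun measurableSet_Ioi h2]
  rw [setIntegral_const, Real.volume_real_Ioc_of_le ht₀pos.le, sub_zero,
    smul_eq_mul, integral_const_mul, Bconst]
  ring

section Xside2

variable {Ω : Type*} [MeasurableSpace Ω] {μ : Measure Ω} [IsProbabilityMeasure μ]
variable {X : Ω → ℝ}

lemma qpos_budget (hXint : Integrable X μ) (hmean : ∫ ω, X ω ∂μ = 0)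
    (htail : ∀ t : ℝ, 0 ≤ t →
      μ {ω | t < |X ω|} ≤ ENNReal.ofReal (min 1 (2 * Real.exp (-t ^ 2 / 2)))) :
    ∫ s in Ioi (0:ℝ), qf μ X s ≤ Bconst := by
  have hXneg : Integrable (fun ω => -X ω) μ := hXint.neg
  have htail' : ∀ t : ℝ, 0 ≤ t →
      μ {ω | t < |(fun ω => -X ω) ω|} ≤ ENNReal.ofReal (min 1 (2 * Real.exp (-t ^ 2 / 2))) := by
    intro t ht
    simpa [abs_neg] using htail t ht
  have hq := qf_integrableOn hXint htail le_rfl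
  have hr := qf_integrableOn hXneg htail' le_rfl
  have heq : ∫ s in Ioi (0:ℝ), qf μ X s = ∫ s in Ioi (0:ℝ), qf μ (fun ω => -X ω) s := by
    rw [← stoploss_eq hXint 0, ← stoploss_eq hXneg 0]
    have hi1 : Integrable (fun ω => max (X ω - 0) 0) μ := by
      have h := (hXint.sub (integrable_const (0:ℝ))).sup (integrable_const (0:ℝ))
      refine h.congr (Eventually.of_forall fun ω => ?_)
      simp [Pi.sup_apply]
    have hi2 : Integrable (fun ω => max (-X ω - 0) 0) μ := by
      have h := (hXneg.sub (integrable_const (0:ℝ))).sup (integrable_const (0:ℝ))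
      refine h.congr (Eventually.of_forall fun ω => ?_)
      simp [Pi.sup_apply]
    have hdiff : ∫ ω, (max (X ω - 0) 0 - max (-X ω - 0) 0) ∂μ = 0 := by
      have hfun : ∀ ω, max (X ω - 0) 0 - max (-X ω - 0) 0 = X ω := by
        intro ω
        rcases le_total (X ω) 0 with h | h
        · rw [max_eq_right (by linarith), max_eq_left (by linarith)]; ring
        · rw [max_eq_left (by linarith), max_eq_right (by linarith)]; ring
      rw [integral_congr_ae (Eventually.of_forall hfun)]
      exact hmean
    rw [integral_sub hi1 hi2] at hdiff
    linarith
  have hsum : (∫ s in Ioi (0:ℝ), qf μ X s) + ∫ s in Ioi (0:ℝ), qf μ (fun ω => -X ω) s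
      ≤ 2 * Bconst := by
    rw [← integral_add hq hr, ← min_integral_eq]
    apply setIntegral_mono_on (hq.add hr) integrableOn_min_exp measurableSet_Ioi
    intro s hs
    exact qf_sum_le hXint htail (le_of_lt hs)
  linarith

lemma Xbound_low (hXint : Integrable X μ) (hmean : ∫ ω, X ω ∂μ = 0)
    (htail : ∀ t : ℝ, 0 ≤ t →
      μ {ω | t < |X ω|} ≤ ENNReal.ofReal (min 1 (2 * Real.exp (-t ^ 2 / 2))))
    {a t : ℝ} (hapos : 0 < a)
    (hHa' : 2*a*Real.exp (-a^2/2) + 2*(Real.sqrt (2*Real.pi))*gaussTail a = Bconst)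
    (ht : 0 ≤ t) (hta : t ≤ a) :
    ∫ ω, max (X ω - t) 0 ∂μ ≤ Bconst - 2*Real.exp (-a^2/2) * t := by
  set p₀ := 2*Real.exp (-a^2/2) with hp₀
  have hp₀pos : 0 < p₀ := by positivity
  set β := qf μ X t with hβdef
  have hβnn : 0 ≤ β := qf_nonneg t
  rw [stoploss_eq hXint t]
  have hqIoit : IntegrableOn (qf μ X) (Ioi t) := qf_integrableOn hXint htail ht
  have hqIoia : IntegrableOn (qf μ X) (Ioi a) := qf_integrableOn hXint htail hapos.le
  rcases le_total p₀ β with hβ | hβ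
  · -- budget case
    have hqIoc : IntegrableOn (qf μ X) (Ioc 0 t) :=
      (qf_integrableOn hXint htail le_rfl).mono_set Ioc_subset_Ioi_self
    have hsplit : ∫ s in Ioi (0:ℝ), qf μ X s
        = (∫ s in Ioc 0 t, qf μ X s) + ∫ s in Ioi t, qf μ X s := by
      rw [← setIntegral_union (Ioc_disjoint_Ioi le_rfl) measurableSet_Ioi hqIoc hqIoit,
        Ioc_union_Ioi_eq_Ioi ht]
    have hlb : t * β ≤ ∫ s in Ioc (0:ℝ) t, qf μ X s := by
      have hconst : (∫ _ in Ioc (0:ℝ) t, β) = t * β := by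
        rw [setIntegral_const, Real.volume_real_Ioc_of_le (by linarith),
          smul_eq_mul, sub_zero]
      rw [← hconst]
      apply setIntegral_mono_on (integrableOn_const (by
        rw [Real.volume_Ioc]; exact ENNReal.ofReal_ne_top)) hqIoc measurableSet_Ioc
      intro s hs
      exact qf_anti hs.2
    have hbud := qpos_budget hXint hmean htail
    have h5 : ∫ s in Ioi t, qf μ X s ≤ Bconst - t * β := by linarith
    have h6 : t * p₀ ≤ t * β := mul_le_mul_of_nonneg_left hβ ht
    linarith
  · -- envelope case
    have hqIoc : IntegrableOn (qf μ X) (Ioc t a) :=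
      hqIoit.mono_set Ioc_subset_Ioi_self
    have hsplit : ∫ s in Ioi t, qf μ X s
        = (∫ s in Ioc t a, qf μ X s) + ∫ s in Ioi a, qf μ X s := by
      rw [← setIntegral_union (Ioc_disjoint_Ioi le_rfl) measurableSet_Ioi hqIoc hqIoia,
        Ioc_union_Ioi_eq_Ioi hta]
    have h1 : ∫ s in Ioc t a, qf μ X s ≤ (a - t) * β := by
      have hconst : (∫ _ in Ioc t a, β) = (a - t) * β := by
        rw [setIntegral_const, Real.volume_real_Ioc_of_le (by linarith),
          smul_eq_mul]
      rw [← hconst]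
      apply setIntegral_mono_on hqIoc (integrableOn_const (by
        rw [Real.volume_Ioc]; exact ENNReal.ofReal_ne_top)) measurableSet_Ioc
      intro s hs
      exact qf_anti hs.1.le
    have h2 : ∫ s in Ioi a, qf μ X s ≤ ∫ s in Ioi a, 2 * Real.exp (-s^2/2) := by
      apply setIntegral_mono_on hqIoia
        ((integrable_expNegSq.const_mul 2).integrableOn) measurableSet_Ioi
      intro s hs
      have hs0 : (0:ℝ) ≤ s := le_of_lt (lt_of_lt_of_le hapos (le_of_lt hs))
      have hsum := qf_sum_le hXint htail hs0
      have hrnn := qf_nonneg (μ := μ) (X := fun ω => -X ω) s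
      calc qf μ X s ≤ min 1 (2 * Real.exp (-s^2/2)) := by linarith
        _ ≤ 2 * Real.exp (-s^2/2) := min_le_right _ _
    have h3 : ∫ s in Ioi a, 2 * Real.exp (-s^2/2)
        = 2 * (Real.sqrt (2*Real.pi)) * gaussTail a := by
      rw [integral_const_mul, tailE_eq]; ring
    have h4 : (a - t) * β ≤ (a - t) * p₀ := mul_le_mul_of_nonneg_left hβ (by linarith)
    have h7 : 2 * (Real.sqrt (2*Real.pi)) * gaussTail a = Bconst - a * p₀ := by
      rw [← hHa']; ring
    calc ∫ s in Ioi t, qf μ X s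
        ≤ (a - t) * p₀ + (Bconst - a * p₀) := by
          rw [hsplit]
          linarith [h1, h2, h3, h4, h7]
      _ = Bconst - p₀ * t := by ring

lemma Xbound_high (hXint : Integrable X μ)
    (htail : ∀ t : ℝ, 0 ≤ t →
      μ {ω | t < |X ω|} ≤ ENNReal.ofReal (min 1 (2 * Real.exp (-t ^ 2 / 2))))
    {a t : ℝ} (hapos : 0 < a) (hat : a ≤ t) :
    ∫ ω, max (X ω - t) 0 ∂μ ≤ 2 * (Real.sqrt (2*Real.pi)) * gaussTail t := by
  have ht0 : (0:ℝ) ≤ t := le_trans hapos.le hat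
  rw [stoploss_eq hXint t]
  have hqIoit : IntegrableOn (qf μ X) (Ioi t) := qf_integrableOn hXint htail ht0
  have h2 : ∫ s in Ioi t, qf μ X s ≤ ∫ s in Ioi t, 2 * Real.exp (-s^2/2) := by
    apply setIntegral_mono_on hqIoit
      ((integrable_expNegSq.const_mul 2).integrableOn) measurableSet_Ioi
    intro s hs
    have hs0 : (0:ℝ) ≤ s := le_of_lt (lt_of_le_of_lt ht0 hs)
    have hsum := qf_sum_le hXint htail hs0
    have hrnn := qf_nonneg (μ := μ) (X := fun ω => -X ω) s
    calc qf μ X s ≤ min 1 (2 * Real.exp (-s^2/2)) := by linarith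
      _ ≤ 2 * Real.exp (-s^2/2) := min_le_right _ _
  have h3 : ∫ s in Ioi t, 2 * Real.exp (-s^2/2)
      = 2 * (Real.sqrt (2*Real.pi)) * gaussTail t := by
    rw [integral_const_mul, tailE_eq]; ring
  linarith

end Xside2

end SubG

open SubG

/-- Sharp one-dimensional convex sub-Gaussian comparison: if `X` is integrable, centered,
with two-sided sub-Gaussian tail `P(|X| > t) ≤ min{1, 2e^{-t²/2}}`, then for every convex
`f : ℝ → ℝ` such that `E[f(c₀ G)]` is finite, `E[f(X)] ≤ E[f(c₀ G)]`, where `G` is standard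
normal and `c₀ = B/φ(z)` with `H(a) = B`, `a > √(2 log 2)`, `p₀ = 2e^{-a²/2}`, `Φ̄(z) = p₀`. -/
theorem stmt0
    {Ω : Type*} [MeasurableSpace Ω] (μ : Measure Ω) [IsProbabilityMeasure μ]
    (X : Ω → ℝ) (hXint : Integrable X μ) (hmean : ∫ ω, X ω ∂μ = 0)
    (htail : ∀ t : ℝ, 0 ≤ t →
      μ {ω | t < |X ω|} ≤ ENNReal.ofReal (min 1 (2 * Real.exp (-t ^ 2 / 2))))
    (a z c₀ : ℝ)
    (ha : Real.sqrt (2 * Real.log 2) < a) (hHa : Hfun a = Bconst)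
    (hz : gaussTail z = 2 * Real.exp (-a ^ 2 / 2))
    (hc₀ : c₀ = Bconst / stdNormalPDF z)
    (f : ℝ → ℝ) (hf : ConvexOn ℝ Set.univ f)
    (hfG : Integrable (fun x => f (c₀ * x)) (gaussianReal 0 1)) :
    ∫ ω, f (X ω) ∂μ ≤ ∫ x, f (c₀ * x) ∂(gaussianReal 0 1) := by
  classical
  have hapos : 0 < a := lt_of_le_of_lt (Real.sqrt_nonneg _) ha
  have hBpos : 0 < Bconst := lt_of_lt_of_le (by norm_num) Bconst_lb
  have hpdfz : 0 < stdNormalPDF z := pdf_pos z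
  have hc₀pos : 0 < c₀ := by rw [hc₀]; exact div_pos hBpos hpdfz
  have hcB : Bconst = c₀ * stdNormalPDF z := by
    rw [hc₀]; field_simp
  have hc₀lb : (1.91:ℝ) ≤ c₀ := by
    rw [hc₀, le_div_iff₀ hpdfz]
    calc (1.91:ℝ) * stdNormalPDF z ≤ 1.91 * 0.399 :=
          mul_le_mul_of_nonneg_left (pdf_le z) (by norm_num)
      _ ≤ 0.7622 := by norm_num
      _ ≤ Bconst := Bconst_lb
  have hnum : ∀ t, a ≤ t → 1 ≤ t^2 * (1 - 1/c₀^2) := by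
    intro t hta
    have ht₀ : Real.sqrt (2 * Real.log 2) ≤ t := le_trans ha.le hta
    have ht2 : 2 * Real.log 2 ≤ t^2 := by
      have h1 : (0:ℝ) ≤ 2 * Real.log 2 := by positivity
      nlinarith [Real.sq_sqrt h1, Real.sqrt_nonneg (2 * Real.log 2)]
    have hlog := Real.log_two_gt_d9
    have hc2 : (1.91:ℝ)^2 ≤ c₀^2 := by nlinarith
    have hc2pos : (0:ℝ) < c₀^2 := by positivity
    have h1c : 1/c₀^2 ≤ 1/(1.91:ℝ)^2 := by
      apply one_div_le_one_div_of_le (by norm_num) hc2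
    nlinarith
  have hHa' : 2*a*Real.exp (-a^2/2) + 2*(Real.sqrt (2*Real.pi))*gaussTail a = Bconst := by
    rw [← hHa, Hfun, tailE_eq]; ring
  have htan : ∀ t, Bconst - 2*Real.exp (-a^2/2) * t ≤ gfun c₀ t := by
    intro t
    have h := tangent_bound hc₀pos hcB t
    rw [hz] at h
    exact h
  have hDa : 0 ≤ gfun c₀ a - 2*(Real.sqrt (2*Real.pi))*gaussTail a := by
    have h1 := htan a
    have h2 : 2*(Real.sqrt (2*Real.pi))*gaussTail a = Bconst - 2*Real.exp (-a^2/2)*a := by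
      linarith [hHa']
    linarith
  have htail_le := tail_le_gfun hc₀pos hapos hnum hDa
  -- stop-loss bound, nonnegative t, generic Y
  have hX_sl : ∀ (Y : Ω → ℝ), Integrable Y μ → (∫ ω, Y ω ∂μ = 0) →
      (∀ t : ℝ, 0 ≤ t →
        μ {ω | t < |Y ω|} ≤ ENNReal.ofReal (min 1 (2 * Real.exp (-t ^ 2 / 2)))) →
      ∀ t, 0 ≤ t → ∫ ω, max (Y ω - t) 0 ∂μ ≤ gfun c₀ t := by
    intro Y hY hYmean hYtail t ht
    rcases le_total t a with h | h
    · refine le_trans (Xbound_low hY hYmean hYtail hapos hHa' ht h) ?_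
      have := htan t
      linarith
    · exact le_trans (Xbound_high hY hYtail hapos h) (htail_le t h)
  have htail' : ∀ t : ℝ, 0 ≤ t →
      μ {ω | t < |(fun ω => -X ω) ω|} ≤ ENNReal.ofReal (min 1 (2 * Real.exp (-t ^ 2 / 2))) := by
    intro t ht
    simpa [abs_neg] using htail t ht
  have hX_sl_all : ∀ t, ∫ ω, max (X ω - t) 0 ∂μ ≤ gfun c₀ t := by
    intro t
    rcases le_or_gt 0 t with ht | ht
    · exact hX_sl X hXint hmean htail t ht
    · have hmean' : ∫ ω, -X ω ∂μ = 0 := by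
        rw [integral_neg, hmean, neg_zero]
      have hneg := hX_sl (fun ω => -X ω) hXint.neg hmean' htail' (-t) (by linarith)
      have hi1 : Integrable (fun ω => X ω - t) μ := hXint.sub (integrable_const t)
      have hi2 : Integrable (fun ω => max (-X ω - (-t)) 0) μ := by
        have h := ((hXint.neg.sub (integrable_const (-t)))).sup (integrable_const (0:ℝ))
        refine h.congr (Eventually.of_forall fun ω => ?_)
        simp [Pi.sup_apply]
      have hid : ∫ ω, max (X ω - t) 0 ∂μ
          = -t + ∫ ω, max (-X ω - (-t)) 0 ∂μ := by
        have hfun : ∀ ω, max (X ω - t) 0 = (X ω - t) + max (-X ω - (-t)) 0 := by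
          intro ω
          rcases le_total (X ω) t with h | h
          · rw [max_eq_right (by linarith), max_eq_left (by linarith)]; ring
          · rw [max_eq_left (by linarith), max_eq_right (by linarith)]; ring
        rw [integral_congr_ae (Eventually.of_forall hfun), integral_add hi1 hi2,
          integral_sub hXint (integrable_const t), hmean, integral_const]
        simp
      rw [hid, gfun_reflect (ne_of_gt hc₀pos) t]
      linarith [hneg]
  -- measures on ℝ
  have hXaem : AEMeasurable X μ := hXint.aemeasurable
  have hmulmeas : Measurable (fun x : ℝ => c₀ * x) := measurable_const_mul c₀
  set γ := gaussianReal 0 1 with hγ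
  set P : Measure ℝ := μ.map X with hP
  set Q : Measure ℝ := γ.map (fun x => c₀ * x) with hQ
  haveI : IsProbabilityMeasure P := Measure.isProbabilityMeasure_map hXaem
  haveI : IsProbabilityMeasure Q := Measure.isProbabilityMeasure_map hmulmeas.aemeasurable
  have hfcont : Continuous f := cont_f hf
  have hPint : Integrable id P := by
    rw [hP, integrable_map_measure aestronglyMeasurable_id hXaem]
    exact hXint
  have hQid : ∀ (g : ℝ → ℝ), Continuous g →
      ∫ x, g x ∂Q = ∫ x, g (c₀ * x) ∂γ := by
    intro g hg
    rw [hQ, integral_map hmulmeas.aemeasurable hg.aestronglyMeasurable]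
  have hPid : ∀ (g : ℝ → ℝ), Continuous g →
      ∫ x, g x ∂P = ∫ ω, g (X ω) ∂μ := by
    intro g hg
    rw [hP, integral_map hXaem hg.aestronglyMeasurable]
  have hQint : Integrable id Q := by
    rw [hQ, integrable_map_measure aestronglyMeasurable_id hmulmeas.aemeasurable]
    have := integrable_id_gauss.const_mul c₀
    exact this.congr (Eventually.of_forall fun x => rfl)
  have hmeanPQ : ∫ x, x ∂P = ∫ x, x ∂Q := by
    have h1 : ∫ x, x ∂P = 0 := by
      rw [hPid (fun x => x) continuous_id]; exact hmean
    have h2 : ∫ x, x ∂Q = 0 := by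
      rw [hQid (fun x => x) continuous_id]
      have : ∫ x, c₀ * x ∂γ = c₀ * ∫ x, x ∂γ := integral_const_mul c₀ _
      rw [this, hγ, integral_id_gauss, mul_zero]
    rw [h1, h2]
  have hsl : ∀ t, ∫ x, max (x - t) 0 ∂P ≤ ∫ x, max (x - t) 0 ∂Q := by
    intro t
    have hcont : Continuous (fun x : ℝ => max (x - t) 0) :=
      (continuous_id.sub continuous_const).max continuous_const
    rw [hPid _ hcont, hQid _ hcont]
    have h2 : ∫ x, max (c₀ * x - t) 0 ∂γ = gfun c₀ t := integral_ramp_gauss hc₀pos t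
    calc ∫ ω, max (X ω - t) 0 ∂μ ≤ gfun c₀ t := hX_sl_all t
      _ = ∫ x, max (c₀ * x - t) 0 ∂γ := h2.symm
  have hfQ : Integrable f Q := by
    rw [hQ, integrable_map_measure hfcont.aestronglyMeasurable hmulmeas.aemeasurable]
    exact hfG.congr (Eventually.of_forall fun x => rfl)
  have hfinal := integral_convex_le hf hPint hQint hmeanPQ hsl hfQ
  rw [hPid f hfcont, hQid f hfcont] at hfinal
  exact hfinal
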